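/- Let h be a positive definite Hermitian n×n matrix, Φ₀(x) := Σ_{j,k} h_{jk} x_j x̄_k, and Ψ₀(x,y) := Σ_{j,k} h_{jk} x_j y_k. Let q be an inhomogeneous complex-valued quadratic polynomial on ℂⁿ whose principal part q₂ satisfies Re q₂(x) < Φ₀ʰᵉʳᵐ(x) = Φ₀(x) for all x ≠ 0. Then for every w ∈ ℂⁿ, the coherent state k_w(x) := exp(2Ψ₀(x,w̄) − Φ₀(w)) belongs to the maximal domain of Top(e^q); that is, ∫_{ℂⁿ} |e^{q(x)}|² · |e^{2Ψ₀(x,w̄)}|² · e^{−2Φ₀(x)} L(dx) < ∞. -/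

import Mathlib

open MeasureTheory Matrix Complex
open scoped ComplexOrder

noncomputable section

namespace BergerCoburn

variable {n : ℕ}

/-- The Hermitian quadratic form `Φ₀(x) = Σ_{j,k} h_{jk} x_j x̄_k`. -/
def PhiH (h : Matrix (Fin n) (Fin n) ℂ) (x : Fin n → ℂ) : ℝ :=
  (∑ j, ∑ k, h j k * x j * star (x k)).re

/-- The polarization `Ψ₀(x,y) = Σ_{j,k} h_{jk} x_j y_k` of `Φ₀`. -/
def PsiH (h : Matrix (Fin n) (Fin n) ℂ) (x y : Fin n → ℂ) : ℂ :=
  ∑ j, ∑ k, h j k * x j * y k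


lemma psi_bound (h : Matrix (Fin n) (Fin n) ℂ) (x y : Fin n → ℂ) :
    ‖PsiH h x y‖ ≤ (∑ j, ∑ k, ‖h j k‖ * ‖y k‖) * ‖x‖ := by
  unfold PsiH
  calc ‖∑ j, ∑ k, h j k * x j * y k‖ ≤ ∑ j, ∑ k, ‖h j k * x j * y k‖ := by
        refine (norm_sum_le _ _).trans (Finset.sum_le_sum fun j _ => norm_sum_le _ _)
    _ ≤ ∑ j, ∑ k, (‖h j k‖ * ‖y k‖) * ‖x‖ := by
        refine Finset.sum_le_sum fun j _ => Finset.sum_le_sum fun k _ => ?_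
        rw [norm_mul, norm_mul]
        calc ‖h j k‖ * ‖x j‖ * ‖y k‖ ≤ ‖h j k‖ * ‖x‖ * ‖y k‖ := by
              gcongr; exact norm_le_pi_norm x j
          _ = ‖h j k‖ * ‖y k‖ * ‖x‖ := by ring
    _ = (∑ j, ∑ k, ‖h j k‖ * ‖y k‖) * ‖x‖ := by
        simp [Finset.sum_mul]

lemma phi_smul (h : Matrix (Fin n) (Fin n) ℂ) (t : ℝ) (x : Fin n → ℂ) :
    PhiH h (t • x) = t ^ 2 * PhiH h x := by
  unfold PhiH
  have e : ∀ j k : Fin n, h j k * (t • x) j * star ((t • x) k)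
      = ((t : ℂ) ^ 2) * (h j k * x j * star (x k)) := by
    intro j k
    simp only [Pi.smul_apply, Complex.real_smul, star_mul', Complex.star_def,
      Complex.conj_ofReal]
    ring
  simp_rw [e, ← Finset.mul_sum, ← Complex.ofReal_pow, Complex.re_ofReal_mul]

lemma phi_cont (h : Matrix (Fin n) (Fin n) ℂ) : Continuous (PhiH h) := by
  unfold PhiH; fun_prop

lemma psi_cont (h : Matrix (Fin n) (Fin n) ℂ) (y : Fin n → ℂ) :
    Continuous (fun x => PsiH h x y) := by
  unfold PsiH; fun_prop

lemma quad_cont (Q : QuadraticMap ℝ (Fin n → ℂ) ℂ) : Continuous fun x => Q x := by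
  have h : ∀ x, Q x = (QuadraticMap.associatedHom ℝ Q) x x :=
    fun x => (QuadraticMap.associated_eq_self_apply ℝ Q x).symm
  simp_rw [h]
  set B : (Fin n → ℂ) →ₗ[ℝ] (Fin n → ℂ) →ₗ[ℝ] ℂ := QuadraticMap.associatedHom ℝ Q with hB
  let B' : (Fin n → ℂ) →ₗ[ℝ] ((Fin n → ℂ) →L[ℝ] ℂ) :=
    (LinearMap.toContinuousLinearMap : ((Fin n → ℂ) →ₗ[ℝ] ℂ) ≃ₗ[ℝ] _).toLinearMap.comp B
  exact (B'.continuous_of_finiteDimensional).clm_apply continuous_id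

lemma gauss_pi {c : ℝ} (hc : 0 < c) :
    Integrable (fun x : Fin n → ℂ => ∏ i, Real.exp (-c * ‖x i‖ ^ 2)) := by
  apply Integrable.fintype_prod (f := fun _ (z : ℂ) => Real.exp (-c * ‖z‖ ^ 2))
  intro i
  have := GaussianFourier.integrable_cexp_neg_mul_sq_norm_add (V := ℂ) (b := (c : ℂ))
    (by simpa using hc) 0 0
  simp only [zero_mul, add_zero] at this
  simpa [Complex.norm_exp, ← Complex.ofReal_pow] using this.norm

lemma eps_bound (hn : 0 < n) (h : Matrix (Fin n) (Fin n) ℂ)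
    (q₂ : QuadraticMap ℝ (Fin n → ℂ) ℂ)
    (h1 : ∀ x : Fin n → ℂ, x ≠ 0 → (q₂ x).re < PhiH h x) :
    ∃ ε > 0, ∀ x : Fin n → ℂ, (q₂ x).re - PhiH h x ≤ -ε * ‖x‖ ^ 2 := by
  set g : (Fin n → ℂ) → ℝ := fun x => (q₂ x).re - PhiH h x with hg
  have hgc : Continuous g := (Complex.continuous_re.comp (quad_cont q₂)).sub (phi_cont h)
  haveI : Nonempty (Fin n) := Fin.pos_iff_nonempty.mp hn
  have hSne : (Metric.sphere (0 : Fin n → ℂ) 1).Nonempty :=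
    NormedSpace.sphere_nonempty.mpr zero_le_one
  obtain ⟨x₀, hx₀, hmax⟩ := (isCompact_sphere (0 : Fin n → ℂ) 1).exists_isMaxOn hSne
    hgc.continuousOn
  have hx₀ne : x₀ ≠ 0 := by
    intro h0
    have := mem_sphere_zero_iff_norm.mp hx₀
    rw [h0] at this; simp at this
  refine ⟨-g x₀, by simpa [hg] using sub_neg.mpr (h1 x₀ hx₀ne), fun x => ?_⟩
  rcases eq_or_ne x 0 with rfl | hx
  · simp [hg, PhiH]
  · have ht : (0 : ℝ) < ‖x‖ := norm_pos_iff.mpr hx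
    set u : Fin n → ℂ := ‖x‖⁻¹ • x with hu
    have hun : u ∈ Metric.sphere (0 : Fin n → ℂ) 1 := by
      simp [hu, norm_smul, abs_of_pos (inv_pos.mpr ht), inv_mul_cancel₀ ht.ne']
    have hxu : ‖x‖ • u = x := by
      rw [hu, smul_smul, mul_inv_cancel₀ ht.ne', one_smul]
    have hgu : g u ≤ g x₀ := hmax hun
    have hscale : g (‖x‖ • u) = ‖x‖ ^ 2 * g u := by
      simp only [hg, QuadraticMap.map_smul, phi_smul, Complex.smul_re, smul_eq_mul]
      ring
    calc g x = g (‖x‖ • u) := by rw [hxu]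
      _ = ‖x‖ ^ 2 * g u := hscale
      _ ≤ ‖x‖ ^ 2 * g x₀ := by nlinarith [sq_nonneg ‖x‖]
      _ = -(-g x₀) * ‖x‖ ^ 2 := by ring

/-- (2.13) of the paper.  Let `h` be positive definite Hermitian,
`Φ₀(x) = Σ h_{jk}x_jx̄_k`, `Ψ₀(x,y) = Σ h_{jk}x_jy_k`, and let `q = q₂ + q₁ + q₀` be an
inhomogeneous quadratic polynomial with `Re q₂(x) < Φ₀(x)` for `x ≠ 0`.  Then for every
`w ∈ ℂⁿ` the coherent state `k_w(x) = exp(2Ψ₀(x,w̄) - Φ₀(w))` lies in the maximal domain of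
`Top(e^q)`, i.e. `∫ |e^{q}|²|e^{2Ψ₀(·,w̄)}|² e^{-2Φ₀} L(dx) < ∞`. -/
theorem statement9
    (h : Matrix (Fin n) (Fin n) ℂ) (hpos : h.PosDef)
    (q₂ : QuadraticMap ℝ (Fin n → ℂ) ℂ) (q₁ : (Fin n → ℂ) →ₗ[ℝ] ℂ) (q₀ : ℂ)
    (q : (Fin n → ℂ) → ℂ) (hq : ∀ x, q x = q₂ x + q₁ x + q₀)
    (h1 : ∀ x : Fin n → ℂ, x ≠ 0 → (q₂ x).re < PhiH h x) :
    ∀ w : Fin n → ℂ,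
      Integrable (fun x => ‖Complex.exp (q x)‖ ^ 2
        * ‖Complex.exp (2 * PsiH h x (star w))‖ ^ 2 * Real.exp (-2 * PhiH h x)) := by
  intro w
  rcases Nat.eq_zero_or_pos n with hn | hn
  · subst hn
    haveI : IsFiniteMeasure (volume : Measure (Fin 0 → ℂ)) :=
      ⟨by rw [volume_pi, Measure.pi_univ]; simp⟩
    have heq : (fun x : Fin 0 → ℂ => ‖Complex.exp (q x)‖ ^ 2
        * ‖Complex.exp (2 * PsiH h x (star w))‖ ^ 2 * Real.exp (-2 * PhiH h x))
        = fun _ => ‖Complex.exp (q 0)‖ ^ 2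
        * ‖Complex.exp (2 * PsiH h 0 (star w))‖ ^ 2 * Real.exp (-2 * PhiH h 0) := by
      funext x; rw [Subsingleton.elim x 0]
    rw [heq]; exact integrable_const _
  · obtain ⟨ε, hε, key⟩ := eps_bound hn h q₂ h1
    set C₁ := ‖LinearMap.toContinuousLinearMap q₁‖ with hC₁
    have hq₁ : ∀ x, ‖q₁ x‖ ≤ C₁ * ‖x‖ := fun x => by
      simpa using (LinearMap.toContinuousLinearMap q₁).le_opNorm x
    set Cw := ∑ j, ∑ k, ‖h j k‖ * ‖(star w) k‖ with hCw
    have hCw0 : (0:ℝ) ≤ Cw := Finset.sum_nonneg fun j _ =>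
      Finset.sum_nonneg fun k _ => by positivity
    have hC₁0 : (0:ℝ) ≤ C₁ := norm_nonneg _
    set C := 2*C₁ + 4*Cw with hC
    set K := C^2/(4*ε) + 2*q₀.re with hK
    have hfeq : ∀ x : Fin n → ℂ, ‖Complex.exp (q x)‖ ^ 2
        * ‖Complex.exp (2 * PsiH h x (star w))‖ ^ 2 * Real.exp (-2 * PhiH h x)
        = Real.exp (2*(q x).re + 4*(PsiH h x (star w)).re + (-2*PhiH h x)) := by
      intro x
      rw [Complex.norm_exp, Complex.norm_exp,
        sq, sq, ← Real.exp_add, ← Real.exp_add, ← Real.exp_add, ← Real.exp_add]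
      congr 1
      have h2re : (2 * PsiH h x (star w)).re = 2 * (PsiH h x (star w)).re := by
        simp [Complex.mul_re]
      rw [h2re]; ring
    have hEbound : ∀ x : Fin n → ℂ, 2*(q x).re + 4*(PsiH h x (star w)).re + (-2*PhiH h x)
        ≤ -(ε/n) * ∑ i, ‖x i‖^2 + K := by
      intro x
      have h2 : (q₂ x).re - PhiH h x ≤ -ε*‖x‖^2 := key x
      have h3 : (q₁ x).re ≤ C₁ * ‖x‖ := by
        refine (Complex.re_le_norm _).trans ?_
        exact hq₁ x
      have h4 : (PsiH h x (star w)).re ≤ Cw * ‖x‖ := by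
        refine (Complex.re_le_norm _).trans ?_
        exact psi_bound h x (star w)
      have h5 : ∑ i, ‖x i‖^2 ≤ (n:ℝ) * ‖x‖^2 := by
        calc ∑ i, ‖x i‖^2 ≤ ∑ _i : Fin n, ‖x‖^2 :=
              Finset.sum_le_sum fun i _ =>
                pow_le_pow_left₀ (norm_nonneg _) (norm_le_pi_norm x i) 2
          _ = (n:ℝ) * ‖x‖^2 := by simp [Finset.sum_const, mul_comm]
      have h6 : C*‖x‖ ≤ ε*‖x‖^2 + C^2/(4*ε) := by
        rw [← sub_nonneg]
        have hid : ε*‖x‖^2 + C^2/(4*ε) - C*‖x‖ = (2*ε*‖x‖ - C)^2 / (4*ε) := by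
          field_simp
          ring
        rw [hid]
        positivity
      have h7 : (ε/n) * (∑ i, ‖x i‖^2) ≤ ε * ‖x‖^2 := by
        calc (ε/n) * (∑ i, ‖x i‖^2) ≤ (ε/n) * ((n:ℝ) * ‖x‖^2) := by
              gcongr
          _ = ε * ‖x‖^2 := by
              have hn0 : (n:ℝ) ≠ 0 := Nat.cast_ne_zero.mpr hn.ne'
              field_simp
      rw [hq x]
      simp only [Complex.add_re]
      rw [hK, hC] at *
      linarith [h2, h3, h4, h6, h7]
    have hcq : Continuous q := by
      have : q = fun x => q₂ x + q₁ x + q₀ := funext hq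
      rw [this]
      exact ((quad_cont q₂).add q₁.continuous_of_finiteDimensional).add continuous_const
    apply Integrable.mono' (g := fun x : Fin n → ℂ =>
      Real.exp K * ∏ i, Real.exp (-(ε/n) * ‖x i‖^2))
    · exact (gauss_pi (div_pos hε (by exact_mod_cast hn))).const_mul _
    · refine Continuous.aestronglyMeasurable ?_
      refine Continuous.mul (Continuous.mul ?_ ?_) ?_
      · exact (Complex.continuous_exp.comp hcq).norm.pow 2
      · exact (Complex.continuous_exp.comp
          (continuous_const.mul (psi_cont h (star w)))).norm.pow 2
      · exact Real.continuous_exp.comp (continuous_const.mul (phi_cont h))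
    · filter_upwards with x
      rw [hfeq x, Real.norm_eq_abs, _root_.abs_of_nonneg (Real.exp_pos _).le]
      calc Real.exp (2*(q x).re + 4*(PsiH h x (star w)).re + (-2*PhiH h x))
          ≤ Real.exp (-(ε/n) * ∑ i, ‖x i‖^2 + K) := Real.exp_le_exp.mpr (hEbound x)
        _ = Real.exp K * ∏ i, Real.exp (-(ε/n) * ‖x i‖^2) := by
            rw [Real.exp_add, ← Real.exp_sum, Finset.mul_sum, mul_comm]


end BergerCoburn
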